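/- For all linear characters ν, ν' of Z and every linear character φ of U, one has ⟨Ind_{ZU}^G(ν⊗φ), Ind_Z^G(ν')⟩_G = [G : ZU] if ν = ν', and ⟨Ind_{ZU}^G(ν⊗φ), Ind_Z^G(ν')⟩_G = 0 if ν ≠ ν'. -/

import Mathlib

open scoped Classical

/-- The linear character of a subgroup `H` of `G`, extended by zero to a function on `G`. -/
noncomputable def extChar {G : Type*} [Group G] (H : Subgroup G) (φ : H →* ℂ) : G → ℂ :=
  fun g => if h : g ∈ H then φ ⟨g, h⟩ else 0

/-- The linear character `ν ⊗ φ` of the subgroup `ZU`, extended by zero to `G`: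
its value at `g = z * u` (with `z ∈ Z`, `u ∈ U`) is `ν z * φ u`, and it vanishes off `ZU`. -/
noncomputable def tensorChar {G : Type*} [Group G] [Fintype G] (Z U : Subgroup G)
    (ν : Z →* ℂ) (φ : U →* ℂ) : G → ℂ :=
  fun g => ∑ z : Z, ∑ u : U, if (z : G) * (u : G) = g then ν z * φ u else 0

/-- Induction to `G` of a class function of the subgroup `H`, extended by zero to `G`. -/
noncomputable def indChar {G : Type*} [Group G] [Fintype G] (H : Subgroup G)
    (f : G → ℂ) : G → ℂ :=
  fun g => (Fintype.card H : ℂ)⁻¹ * ∑ x : G, f (x * g * x⁻¹)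

/-- The inner product `⟨α, β⟩_H = |H|⁻¹ * Σ_{x ∈ H} α x * conj (β x)` of (the restrictions to
the subgroup `H` of) two functions `α β : G → ℂ`. -/
noncomputable def innerSub {G : Type*} [Group G] [Fintype G] (H : Subgroup G)
    (α β : G → ℂ) : ℂ :=
  (Fintype.card H : ℂ)⁻¹ * ∑ x : H, α x * (starRingEnd ℂ) (β x)

section helpers
variable {G : Type*} [Group G] [Fintype G] {Z U : Subgroup G}

lemma mul_conj_self {Z : Type*} [Group Z] [Fintype Z] (ν : Z →* ℂ) (z : Z) :
    ν z * (starRingEnd ℂ) (ν z) = 1 := by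
  have h1 : (ν z) ^ (Fintype.card Z) = 1 := by
    rw [← map_pow, pow_card_eq_one, map_one]
  have habs : ‖ν z‖ = 1 :=
    Complex.norm_eq_one_of_pow_eq_one h1 Fintype.card_ne_zero
  rw [Complex.mul_conj, Complex.normSq_eq_norm_sq, habs]
  norm_num

lemma orth {Z : Type*} [Group Z] [Fintype Z] (ν ν' : Z →* ℂ) :
    ∑ z : Z, ν z * (starRingEnd ℂ) (ν' z) = if ν = ν' then (Fintype.card Z : ℂ) else 0 := by
  split_ifs with h
  · subst h
    rw [Finset.sum_congr rfl (fun z _ => mul_conj_self ν z)]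
    simp
  · obtain ⟨z0, hz0⟩ : ∃ z, ν z ≠ ν' z := by
      by_contra hc; push_neg at hc; exact h (MonoidHom.ext hc)
    set f : Z → ℂ := fun z => ν z * (starRingEnd ℂ) (ν' z) with hf
    have hmul : ∀ a b, f (a*b) = f a * f b := by
      intro a b; simp only [hf, map_mul]; ring
    have hsum : ∑ z, f (z0 * z) = ∑ z, f z :=
      Fintype.sum_equiv (Equiv.mulLeft z0) _ _ (fun z => rfl)
    have hkey : f z0 * ∑ z, f z = ∑ z, f z := by
      rw [Finset.mul_sum, ← hsum]
      exact Finset.sum_congr rfl (fun z _ => (hmul z0 z).symm)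
    have hne : f z0 ≠ 1 := by
      intro hfe
      have h2 := mul_conj_self ν' z0
      have hc0 : (starRingEnd ℂ) (ν' z0) ≠ 0 := by
        intro h0; rw [h0, mul_zero] at h2; exact one_ne_zero h2.symm
      exact hz0 (mul_right_cancel₀ hc0 (hfe.trans h2.symm))
    by_contra hS
    have hkey' : f z0 * Finset.univ.sum f = 1 * Finset.univ.sum f := by
      rw [one_mul]; exact hkey
    exact hne (mul_right_cancel₀ hS hkey')

omit [Fintype G] in
lemma conj_mem_central (hZ : Z ≤ Subgroup.center G) :
    ∀ y h : G, h ∈ Z → y * h * y⁻¹ = h := by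
  intro y h hh
  have := (Subgroup.mem_center_iff.mp (hZ hh)) y
  rw [this, mul_assoc, mul_inv_cancel, mul_one]

omit [Fintype G] in
lemma ext_conj_inv (hZ : Z ≤ Subgroup.center G) (ν' : Z →* ℂ) (x g : G) :
    extChar Z ν' (x * g * x⁻¹) = extChar Z ν' g := by
  unfold extChar
  by_cases hg : g ∈ Z
  · rw [conj_mem_central hZ x g hg]
  · have h2 : x * g * x⁻¹ ∉ Z := by
      intro hmem
      apply hg
      have := conj_mem_central hZ x⁻¹ _ hmem
      have hg' : g = x * g * x⁻¹ := by
        rw [← this]; group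
      rw [hg']; exact hmem
    rw [dif_neg hg, dif_neg h2]

lemma indChar_ext (hZ : Z ≤ Subgroup.center G) (ν' : Z →* ℂ) (g : G) :
    indChar Z (extChar Z ν') g =
      (Fintype.card G : ℂ) * (Fintype.card Z : ℂ)⁻¹ * extChar Z ν' g := by
  unfold indChar
  rw [Finset.sum_congr rfl (fun x _ => ext_conj_inv hZ ν' x g)]
  simp [Finset.sum_const, Finset.card_univ]
  ring

lemma tensor_mem (hZU : Z ⊓ U = ⊥) (ν : Z →* ℂ) (φ : U →* ℂ) (g : G) (hg : g ∈ Z) :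
    tensorChar Z U ν φ g = ν ⟨g, hg⟩ := by
  unfold tensorChar
  have hiff : ∀ (z : Z) (u : U), ((z:G) * (u:G) = g) ↔ (z = ⟨g,hg⟩ ∧ u = 1) := by
    intro z u
    constructor
    · intro he
      have hu : (u : G) ∈ Z := by
        have h3 : (u:G) = (z:G)⁻¹ * g := by rw [← he]; group
        rw [h3]; exact Z.mul_mem (Z.inv_mem z.2) hg
      have hu1 : (u:G) = 1 := by
        have h4 : (u:G) ∈ Z ⊓ U := ⟨hu, u.2⟩
        rwa [hZU, Subgroup.mem_bot] at h4
      refine ⟨?_, Subtype.ext hu1⟩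
      apply Subtype.ext
      show (z:G) = g
      rw [← he, hu1, mul_one]
    · rintro ⟨rfl, rfl⟩; simp
  have hstep : ∀ z : Z, (∑ u : U, if (z:G)*(u:G) = g then ν z * φ u else 0)
      = if z = ⟨g,hg⟩ then ν z else 0 := by
    intro z
    by_cases hz : z = ⟨g,hg⟩
    · rw [if_pos hz]
      rw [Finset.sum_congr rfl (fun u _ => if_congr (hiff z u) rfl rfl)]
      simp [hz]
    · rw [if_neg hz]
      rw [Finset.sum_congr rfl (fun u _ => if_congr (hiff z u) rfl rfl)]
      simp [hz]
  rw [Finset.sum_congr rfl (fun z _ => hstep z)]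
  simp

lemma sum_dite_subgroup (Z : Subgroup G) (F : Z → ℂ) :
    ∑ g : G, (if h : g ∈ Z then F ⟨g, h⟩ else 0) = ∑ z : Z, F z := by
  rw [← Finset.sum_subset (Finset.subset_univ ((Z : Set G).toFinset))
      (fun x _ hx => by rw [dif_neg (by simpa [Set.mem_toFinset] using hx)])]
  rw [Finset.sum_subtype (p := fun x => x ∈ Z) ((Z : Set G).toFinset)
      (fun x => by simp [Set.mem_toFinset])
      (fun g => if h : g ∈ Z then F ⟨g, h⟩ else 0)]
  apply Finset.sum_congr rfl
  intro z _
  rw [dif_pos z.2]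

lemma sum_conj (f : G → ℂ) (y : G) : ∑ x : G, f (y * x * y⁻¹) = ∑ x : G, f x :=
  Fintype.sum_equiv (MulAut.conj y).toEquiv _ _ (fun x => rfl)

end helpers

/-- `⟨Ind_{ZU}^G(ν ⊗ φ), Ind_Z^G(ν')⟩_G` equals the index `[G : ZU]` if `ν = ν'`, and
equals `0` if `ν ≠ ν'`. -/
theorem stmt3 {G : Type*} [Group G] [Fintype G] (Z U : Subgroup G)
    (hZ : Z ≤ Subgroup.center G) (hZU : Z ⊓ U = ⊥)
    (ν ν' : Z →* ℂ) (φ : U →* ℂ) :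
    innerSub ⊤ (indChar (Z ⊔ U) (tensorChar Z U ν φ)) (indChar Z (extChar Z ν')) =
      if ν = ν' then ((Z ⊔ U).index : ℂ) else 0 := by
  classical
  have hcardZ : (Fintype.card Z : ℂ) ≠ 0 := Nat.cast_ne_zero.mpr Fintype.card_ne_zero
  have hcardH : (Fintype.card (Z ⊔ U : Subgroup G) : ℂ) ≠ 0 :=
    Nat.cast_ne_zero.mpr Fintype.card_ne_zero
  have hcardG : (Fintype.card G : ℂ) ≠ 0 := Nat.cast_ne_zero.mpr Fintype.card_ne_zero
  set c : ℂ := (Fintype.card G : ℂ) * (Fintype.card Z : ℂ)⁻¹ with hc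
  have hconjc : (starRingEnd ℂ) c = c := by
    simp [hc, map_mul, map_inv₀]
  unfold innerSub
  have hct : ((Fintype.card (⊤ : Subgroup G) : ℕ) : ℂ) = (Fintype.card G : ℂ) := by
    norm_cast
    exact Fintype.card_congr Subgroup.topEquiv.toEquiv
  rw [hct]
  rw [show (∑ x : (⊤:Subgroup G), indChar (Z ⊔ U) (tensorChar Z U ν φ) ↑x *
        (starRingEnd ℂ) (indChar Z (extChar Z ν') ↑x)) =
      ∑ x : G, indChar (Z ⊔ U) (tensorChar Z U ν φ) x *
        (starRingEnd ℂ) (indChar Z (extChar Z ν') x) from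
    Fintype.sum_equiv Subgroup.topEquiv.toEquiv _ _ (fun x => rfl)]
  have hpt : ∀ x : G, indChar (Z ⊔ U) (tensorChar Z U ν φ) x *
      (starRingEnd ℂ) (indChar Z (extChar Z ν') x)
      = (Fintype.card (Z ⊔ U : Subgroup G) : ℂ)⁻¹ * c *
        ∑ y : G, tensorChar Z U ν φ (y * x * y⁻¹) * (starRingEnd ℂ) (extChar Z ν' x) := by
    intro x
    rw [indChar_ext hZ ν' x, map_mul, hconjc]
    unfold indChar
    rw [← Finset.sum_mul]
    ring
  rw [Finset.sum_congr rfl (fun x _ => hpt x), ← Finset.mul_sum, Finset.sum_comm]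
  have hin : ∀ y : G, (∑ x : G, tensorChar Z U ν φ (y*x*y⁻¹) *
      (starRingEnd ℂ) (extChar Z ν' x)) = ∑ z : Z, ν z * (starRingEnd ℂ) (ν' z) := by
    intro y
    have e1 : ∑ x : G, tensorChar Z U ν φ (y*x*y⁻¹) * (starRingEnd ℂ) (extChar Z ν' x)
        = ∑ x : G, tensorChar Z U ν φ (y*x*y⁻¹) *
            (starRingEnd ℂ) (extChar Z ν' (y*x*y⁻¹)) :=
      Finset.sum_congr rfl (fun x _ => by rw [ext_conj_inv hZ ν' y x])
    rw [e1, sum_conj (fun x => tensorChar Z U ν φ x * (starRingEnd ℂ) (extChar Z ν' x)) y]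
    rw [← sum_dite_subgroup Z (fun z => ν z * (starRingEnd ℂ) (ν' z))]
    apply Finset.sum_congr rfl
    intro g _
    by_cases hg : g ∈ Z
    · rw [dif_pos hg, tensor_mem hZU ν φ g hg]
      unfold extChar
      rw [dif_pos hg]
    · rw [dif_neg hg]
      unfold extChar
      rw [dif_neg hg]
      simp
  rw [Finset.sum_congr rfl (fun y _ => hin y), Finset.sum_const, Finset.card_univ, orth]
  have hidx : ((Z ⊔ U).index : ℂ) * (Fintype.card (Z ⊔ U : Subgroup G) : ℂ)
      = (Fintype.card G : ℂ) := by
    have h5 := Subgroup.index_mul_card (Z ⊔ U)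
    rw [Nat.card_eq_fintype_card, Nat.card_eq_fintype_card] at h5
    exact_mod_cast congrArg (Nat.cast (R := ℂ)) h5
  split_ifs with h
  · rw [nsmul_eq_mul]
    have hidx' : ((Z ⊔ U).index : ℂ)
        = (Fintype.card G : ℂ) * (Fintype.card (Z ⊔ U : Subgroup G) : ℂ)⁻¹ := by
      field_simp
      linear_combination hidx
    rw [hidx', hc]
    field_simp
  · simp
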